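/- Let p ≥ 1 and let f be a consensus function on the n-cube Q_n. Then f equals the ℓ_p-function if and only if f satisfies the Translation property (T) and for every profile π = (x₁,…,x_k): the all-zeros vertex 𝟎 belongs to f(π) if and only if Char_p(π) ≤ Char_p(π ⊕ a) for every vertex a in Q_n. -/
import Mathlib


/-- A vertex of the n-cube `Q_n`: an element of `{0,1}^n`. -/
abbrev Vertex (n : ℕ) := Fin n → Bool

/-- Coordinatewise addition modulo 2 (`u ⊕ v`). -/
def vxor {n : ℕ} (u v : Vertex n) : Vertex n := fun i => xor (u i) (v i)

/-- A profile: a nonempty finite sequence of vertices of `Q_n`. -/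
def Profile (n : ℕ) := { l : List (Vertex n) // l ≠ [] }

/-- Translation of a profile: `π ⊕ v = (x₁ ⊕ v, …, x_k ⊕ v)`. -/
def pxor {n : ℕ} (π : Profile n) (v : Vertex n) : Profile n :=
  ⟨π.1.map (fun x => vxor x v), by simpa using π.2⟩

/-- The Translation property (T) for a consensus function. -/
def Translation {n : ℕ} (f : Profile n → Set (Vertex n)) : Prop :=
  ∀ (π : Profile n) (u v : Vertex n), u ∈ f π → vxor u v ∈ f (pxor π v)

/-- Hamming distance on the n-cube. -/
def cubeDist {n : ℕ} (u v : Vertex n) : ℕ := hammingDist u v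

/-- The all-zeros vertex `𝟎`. -/
def zeroV (n : ℕ) : Vertex n := fun _ => false

/-- `‖u‖ = d(𝟎,u)`, the number of ones in `u`. -/
def vnorm {n : ℕ} (u : Vertex n) : ℕ := cubeDist (zeroV n) u

/-- `‖π‖ = max{‖x₁‖,…,‖x_k‖}`. -/
def pnorm {n : ℕ} (π : Profile n) : ℕ := (π.1.map vnorm).foldr max 0

/-- Eccentricity `e(x, π) = max_j d(x, x_j)`. -/
def ecc {n : ℕ} (π : Profile n) (x : Vertex n) : ℕ :=
  (π.1.map (fun y => cubeDist x y)).foldr max 0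

/-- The center function. -/
def Cen {n : ℕ} (π : Profile n) : Set (Vertex n) :=
  {x | ∀ y : Vertex n, ecc π x ≤ ecc π y}

/-- Status `S_π(x) = Σ_j d(x, x_j)`. -/
def status {n : ℕ} (π : Profile n) (x : Vertex n) : ℕ :=
  (π.1.map (fun y => cubeDist x y)).sum

/-- The median function. -/
def Med {n : ℕ} (π : Profile n) : Set (Vertex n) :=
  {x | ∀ y : Vertex n, status π x ≤ status π y}

/-- The anti-median function. -/
def AM {n : ℕ} (π : Profile n) : Set (Vertex n) :=
  {x | ∀ y : Vertex n, status π y ≤ status π x}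

/-- `Σ_{j=1}^k xᵢ^j`: the number of profile entries with a 1 in coordinate `i`. -/
def cnt {n : ℕ} (π : Profile n) (i : Fin n) : ℕ :=
  (π.1.map (fun x => if x i then 1 else 0)).sum

/-- The majority vertex `Maj(π)`: `wᵢ = 1` iff `Σ_j xᵢ^j > k/2`. -/
def Maj {n : ℕ} (π : Profile n) : Vertex n :=
  fun i => decide (π.1.length < 2 * cnt π i)

/-- The minority vertex `Min(π)`: `mᵢ = 1` iff `Σ_j xᵢ^j < k/2`. -/
def MinV {n : ℕ} (π : Profile n) : Vertex n :=
  fun i => decide (2 * cnt π i < π.1.length)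

/-- The Condorcet score `Cs(π)`. -/
def Cs {n : ℕ} (π : Profile n) : ℕ :=
  (Finset.univ.filter (fun i : Fin n => 2 * cnt π i = π.1.length)).card

/-- The Majority property (Maj). -/
def MajProp {n : ℕ} (f : Profile n → Set (Vertex n)) : Prop :=
  ∀ π : Profile n, Maj π ∈ f π

/-- The Minority property (Min). -/
def MinProp {n : ℕ} (f : Profile n → Set (Vertex n)) : Prop :=
  ∀ π : Profile n, MinV π ∈ f π

/-- The Restricted Range property (RR): `|f(π)| ≤ 2^{Cs(π)}`. -/
def RestrictedRange {n : ℕ} (f : Profile n → Set (Vertex n)) : Prop :=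
  ∀ π : Profile n, (f π).ncard ≤ 2 ^ Cs π

/-- The `ℓ_p` status `ℓ_pS_π(x) = Σ_j d(x,x_j)^p`. -/
noncomputable def lpStatus {n : ℕ} (p : ℝ) (π : Profile n) (x : Vertex n) : ℝ :=
  (π.1.map (fun y => (cubeDist x y : ℝ) ^ p)).sum

/-- The `ℓ_p`-function. -/
noncomputable def lpFun {n : ℕ} (p : ℝ) (π : Profile n) : Set (Vertex n) :=
  {x | ∀ y : Vertex n, lpStatus p π x ≤ lpStatus p π y}

/-- The `p`-Characteristic `Char_p(π) = Σ_j ‖x_j‖^p`. -/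
noncomputable def Charp {n : ℕ} (p : ℝ) (π : Profile n) : ℝ :=
  (π.1.map (fun x => (vnorm x : ℝ) ^ p)).sum

/-- Concatenation of profiles `π₁π₂`. -/
def pconcat {n : ℕ} (π₁ π₂ : Profile n) : Profile n :=
  ⟨π₁.1 ++ π₂.1, by simp [π₁.2]⟩

/-- The profile of length one consisting of the single vertex `x`. -/
def singleP {n : ℕ} (x : Vertex n) : Profile n := ⟨[x], by simp⟩

/-- The Consistency property (C). -/
def Consistency {n : ℕ} (f : Profile n → Set (Vertex n)) : Prop :=
  ∀ π₁ π₂ : Profile n, (f π₁ ∩ f π₂).Nonempty → f (pconcat π₁ π₂) = f π₁ ∩ f π₂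

lemma vxor_self {n : ℕ} (u : Vertex n) : vxor u u = zeroV n := by
  funext i; simp [vxor, zeroV]

lemma vxor_cancel {n : ℕ} (u v : Vertex n) : vxor (vxor u v) v = u := by
  funext i; simp [vxor]

lemma vxor_zero {n : ℕ} (u : Vertex n) : vxor (zeroV n) u = u := by
  funext i; simp [vxor, zeroV]

lemma vnorm_vxor {n : ℕ} (x v : Vertex n) : vnorm (vxor x v) = cubeDist v x := by
  unfold vnorm cubeDist hammingDist
  congr 1
  apply Finset.filter_congr
  intro i _
  cases hx : x i <;> cases hv : v i <;> simp [vxor, zeroV, hx, hv]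

lemma charp_pxor {n : ℕ} (p : ℝ) (π : Profile n) (v : Vertex n) :
    Charp p (pxor π v) = lpStatus p π v := by
  unfold Charp lpStatus pxor
  simp only [List.map_map]
  congr 1
  apply List.map_congr_left
  intro x _
  simp [Function.comp, vnorm_vxor]

lemma charp_self {n : ℕ} (p : ℝ) (π : Profile n) :
    Charp p π = lpStatus p π (zeroV n) := rfl

lemma pxor_pxor {n : ℕ} (π : Profile n) (u v : Vertex n) :
    pxor (pxor π u) v = pxor π (vxor u v) := by
  apply Subtype.ext
  simp only [pxor, List.map_map]
  congr 1
  funext x i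
  cases x i <;> cases u i <;> cases v i <;> simp [vxor, Function.comp]

lemma vxor_comm {n : ℕ} (u v : Vertex n) : vxor u v = vxor v u := by
  funext i; simp [vxor, Bool.xor_comm]

lemma vxor_cancel_left {n : ℕ} (u y : Vertex n) : vxor u (vxor u y) = y := by
  funext i; cases hu : u i <;> cases hy : y i <;> simp [vxor, hu, hy]

lemma lpStatus_pxor {n : ℕ} (p : ℝ) (π : Profile n) (v x : Vertex n) :
    lpStatus p (pxor π v) x = lpStatus p π (vxor x v) := by
  rw [← charp_pxor, ← charp_pxor, pxor_pxor, vxor_comm]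

/-- For `p ≥ 1`, `f = ℓ_p` iff `f` satisfies (T) and for every profile `π`,
`𝟎 ∈ f(π)` iff `Char_p(π) ≤ Char_p(π ⊕ a)` for every vertex `a`. -/
theorem stmt6 {n : ℕ} (p : ℝ) (hp : 1 ≤ p) (f : Profile n → Set (Vertex n))
    (hf : ∀ π : Profile n, (f π).Nonempty) :
    f = lpFun p ↔
      (Translation f ∧
        ∀ π : Profile n, (zeroV n ∈ f π ↔ ∀ a : Vertex n, Charp p π ≤ Charp p (pxor π a))) := by
  constructor
  · rintro rfl
    constructor
    · intro π u v hu y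
      rw [lpStatus_pxor, lpStatus_pxor, vxor_cancel]
      exact hu _
    · intro π
      constructor
      · intro h a
        rw [charp_pxor, charp_self]
        exact h a
      · intro h y
        have := h y
        rwa [charp_pxor, charp_self] at this
  · rintro ⟨hT, hC⟩
    funext π
    ext u
    constructor
    · intro hu y
      have h0 : zeroV n ∈ f (pxor π u) := by
        have := hT π u u hu
        rwa [vxor_self] at this
      have := ((hC (pxor π u)).1 h0) (vxor u y)
      rw [charp_pxor, pxor_pxor, charp_pxor, vxor_cancel_left] at this
      exact this
    · intro hu
      have h0 : zeroV n ∈ f (pxor π u) := by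
        apply (hC (pxor π u)).2
        intro a
        rw [charp_pxor, pxor_pxor, charp_pxor]
        exact hu _
      have := hT (pxor π u) (zeroV n) u h0
      rwa [vxor_zero, pxor_pxor, vxor_self, show pxor π (zeroV n) = π from by
        apply Subtype.ext
        simp only [pxor]
        rw [show (fun x => vxor x (zeroV n)) = id from ?_, List.map_id]
        funext x i
        simp [vxor, zeroV]] at this
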